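/- Let R be a finite principal left ideal ring and P a left multiplicative property on R^n with P(0) = false. Then each code C_i generated by the greedy lexicode algorithm is a free left R-module, and the selected vectors a_{j_1}, ..., a_{j_k} form a basis of C_i. -/

import Mathlib

open Classical in
/-- The submodule `V_i = R{b_1, …, b_i}` generated by the first `i` basis vectors. -/
noncomputable def Vlevel {R : Type*} [Ring R] {n : ℕ}
    (b : Module.Basis (Fin n) R (Fin n → R)) (i : ℕ) : Submodule R (Fin n → R) :=
  Submodule.span R (⇑b '' {j : Fin n | (j : ℕ) < i})

open Classical in
/-- The level of a vector: the least `i` with `x ∈ V_i`, computed from the highest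
index of a nonzero coordinate with respect to the basis `b`. -/
noncomputable def lvl {R : Type*} [Ring R] {n : ℕ}
    (b : Module.Basis (Fin n) R (Fin n → R)) (x : Fin n → R) : ℕ :=
  Finset.univ.sup fun j : Fin n => if b.repr x j ≠ 0 then (j : ℕ) + 1 else 0

/-- The lexicographic ordering on `Rⁿ` induced by a total order `L` on `R` and the
ordered basis `b`: first compare levels, then compare coefficient vectors
lexicographically from the highest index down. -/
def lexLt {R : Type*} [Ring R] {n : ℕ} (L : LinearOrder R)
    (b : Module.Basis (Fin n) R (Fin n → R)) (x y : Fin n → R) : Prop :=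
  lvl b x < lvl b y ∨
    (lvl b x = lvl b y ∧ ∃ k : Fin n, L.lt (b.repr x k) (b.repr y k) ∧
      ∀ j : Fin n, k < j → b.repr x j = b.repr y j)

/-- A total order `L` on `R` is respectful if whenever `Rx ⊋ Ry` (both nonzero),
some unit multiple `αx` of `x` precedes every unit multiple `uy` of `y`. -/
def RespectfulOrder {R : Type*} [Ring R] (L : LinearOrder R) : Prop :=
  ∀ x y : R, x ≠ 0 → y ≠ 0 → Ideal.span {y} < Ideal.span {x} →
    ∃ α : Rˣ, ∀ u : Rˣ, L.lt ((α : R) * x) ((u : R) * y)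

/-- Admissibility of a candidate vector `x` at a stage with current code `C`:
`P(γx + c)` holds for every generator `γ ∈ Γ` and every `c ∈ C`. -/
def Admissible {R : Type*} [Ring R] {n : ℕ} (P : (Fin n → R) → Bool) (Γ : Set R)
    (C : Submodule R (Fin n → R)) (x : Fin n → R) : Prop :=
  ∀ γ ∈ Γ, ∀ c ∈ C, P (γ • x + c) = true

/-- A run of the greedy lexicode algorithm: `C 0 = 0`, and at each step
`i = 1, …, n` either the lexicographically smallest admissible vector
`a i ∈ V_i \ V_{i-1}` is selected and `C i = R·(a i) + C (i-1)`, or no vector of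
`V_i \ V_{i-1}` is admissible and `C i = C (i-1)`. -/
def GreedyRun {R : Type*} [Ring R] {n : ℕ} (L : LinearOrder R)
    (b : Module.Basis (Fin n) R (Fin n → R)) (P : (Fin n → R) → Bool) (Γ : Set R)
    (C : ℕ → Submodule R (Fin n → R)) (a : ℕ → (Fin n → R)) (sel : ℕ → Prop) : Prop :=
  C 0 = ⊥ ∧
  ∀ i : ℕ, 1 ≤ i → i ≤ n →
    ((sel i ∧ a i ∈ Vlevel b i ∧ a i ∉ Vlevel b (i - 1) ∧
        Admissible P Γ (C (i - 1)) (a i) ∧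
        (∀ x, x ∈ Vlevel b i → x ∉ Vlevel b (i - 1) →
          Admissible P Γ (C (i - 1)) x → x = a i ∨ lexLt L b (a i) x) ∧
        C i = Submodule.span R {a i} ⊔ C (i - 1))
      ∨ (¬ sel i ∧
          (∀ x, x ∈ Vlevel b i → x ∉ Vlevel b (i - 1) →
            ¬ Admissible P Γ (C (i - 1)) x) ∧
          C i = C (i - 1)))


theorem li_aux {R M : Type*} [Ring R] [AddCommGroup M] [Module R M] {ι : Type*}
    (v : ι → M) (t : ι → ℕ) (W : ι → Submodule R M)
    (hinj : Function.Injective t)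
    (h1 : ∀ j j', t j' < t j → v j' ∈ W j)
    (h2 : ∀ j (r : R), r • v j ∈ W j → r = 0) : LinearIndependent R v := by
  classical
  rw [linearIndependent_iff]
  intro l hl
  by_contra hne
  have hsupp : l.support.Nonempty := Finsupp.support_nonempty_iff.mpr hne
  obtain ⟨j0, hj0mem, hj0max⟩ := Finset.exists_max_image l.support t hsupp
  have htot : ∑ j ∈ l.support, l j • v j = 0 := by
    rw [← hl, Finsupp.linearCombination_apply, Finsupp.sum]
  rw [← Finset.sum_erase_add l.support _ hj0mem] at htot
  have hmem : l j0 • v j0 ∈ W j0 := by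
    have : l j0 • v j0 = - ∑ j ∈ l.support.erase j0, l j • v j := by
      rw [eq_neg_iff_add_eq_zero, add_comm]; exact htot
    rw [this]
    refine Submodule.neg_mem _ (Submodule.sum_mem _ fun j hj => Submodule.smul_mem _ _ ?_)
    have hjne := Finset.ne_of_mem_erase hj
    have hle := hj0max j (Finset.mem_of_mem_erase hj)
    exact h1 j0 j (lt_of_le_of_ne hle (fun h => hjne (hinj h)))
  exact (Finsupp.mem_support_iff.mp hj0mem) (h2 j0 (l j0) hmem)

/-- Theorem: if `P` is left multiplicative with `P(0) = false`, then each code `C_i`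
produced by the greedy lexicode algorithm is a free left `R`-module, and the vectors
selected up to stage `i` form a basis of `C_i`. -/
theorem greedy_lexicode_free {R : Type*} [Ring R] [Fintype R] {n : ℕ}
    (hPLIR : ∀ I : Ideal R, ∃ g : R, I = Ideal.span {g})
    (L : LinearOrder R) (hL : RespectfulOrder L)
    (b : Module.Basis (Fin n) R (Fin n → R))
    (P : (Fin n → R) → Bool)
    (hP : ∀ (u : Rˣ) (x : Fin n → R), P ((u : R) • x) = P x)
    (hP0 : P 0 = false)
    (Γ : Set R)
    (hΓ : ∀ r : R, r ≠ 0 → ∃ γ ∈ Γ, Ideal.span {r} = Ideal.span {γ})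
    (C : ℕ → Submodule R (Fin n → R)) (a : ℕ → (Fin n → R)) (sel : ℕ → Prop)
    (hrun : GreedyRun L b P Γ C a sel) :
    ∀ i ≤ n, ∃ β : Module.Basis {j : ℕ // 1 ≤ j ∧ j ≤ i ∧ sel j} R (C i),
      ∀ j : {j : ℕ // 1 ≤ j ∧ j ≤ i ∧ sel j}, (β j : Fin n → R) = a (j : ℕ) := by
  obtain ⟨hC0, hstep⟩ := hrun
  -- the data of a selected step
  have hsel : ∀ j, 1 ≤ j → j ≤ n → sel j →
      Admissible P Γ (C (j - 1)) (a j) ∧ C j = Submodule.span R {a j} ⊔ C (j - 1) := by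
    intro j h1 h2 hs
    rcases hstep j h1 h2 with ⟨_, _, _, hadm, _, hCj⟩ | ⟨hn, _, _⟩
    · exact ⟨hadm, hCj⟩
    · exact absurd hs hn
  -- monotonicity of C on [0, n]
  have hmono1 : ∀ k, 1 ≤ k → k ≤ n → C (k - 1) ≤ C k := by
    intro k h1 h2
    rcases hstep k h1 h2 with ⟨_, _, _, _, _, hCk⟩ | ⟨_, _, hCk⟩
    · rw [hCk]; exact le_sup_right
    · rw [hCk]
  have hmono : ∀ j i, j ≤ i → i ≤ n → C j ≤ C i := by
    intro j i
    induction i with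
    | zero => intro hji _; rw [Nat.le_zero.mp hji]
    | succ i ih =>
      intro hji hin
      rcases Nat.lt_or_ge j (i + 1) with h | h
      · have := hmono1 (i + 1) (by omega) hin
        simp only [Nat.add_sub_cancel] at this
        exact le_trans (ih (by omega) (by omega)) this
      · have : j = i + 1 := by omega
        rw [this]
  -- key lemma: no nonzero multiple of a selected vector lies in the previous code
  have hkey : ∀ j, 1 ≤ j → j ≤ n → sel j → ∀ r : R, r • a j ∈ C (j - 1) → r = 0 := by
    intro j h1 h2 hs r hr
    by_contra hr0
    obtain ⟨γ, hγΓ, hspan⟩ := hΓ r hr0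
    have hγmem : γ ∈ Ideal.span {r} := by
      rw [hspan]; exact Submodule.mem_span_singleton_self γ
    obtain ⟨s, hsr⟩ := Submodule.mem_span_singleton.mp hγmem
    have hmem : γ • a j ∈ C (j - 1) := by
      have : γ • a j = s • (r • a j) := by
        rw [← hsr, smul_eq_mul, mul_smul]
      rw [this]; exact Submodule.smul_mem _ s hr
    have hadm := (hsel j h1 h2 hs).1 γ hγΓ (-(γ • a j)) (Submodule.neg_mem _ hmem)
    rw [add_neg_cancel, hP0] at hadm
    exact Bool.false_ne_true hadm
  -- each selected vector belongs to its code
  have hmemC : ∀ j, 1 ≤ j → j ≤ n → sel j → a j ∈ C j := by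
    intro j h1 h2 hs
    rw [(hsel j h1 h2 hs).2]
    exact Submodule.mem_sup_left (Submodule.mem_span_singleton_self _)
  -- the span description of C i
  have hspanC : ∀ i ≤ n, C i = Submodule.span R (a '' {j : ℕ | 1 ≤ j ∧ j ≤ i ∧ sel j}) := by
    intro i
    induction i with
    | zero =>
      intro _
      have : {j : ℕ | 1 ≤ j ∧ j ≤ 0 ∧ sel j} = ∅ := by
        ext j; simp only [Set.mem_setOf_eq, Set.mem_empty_iff_false, iff_false]
        rintro ⟨h1, h2, _⟩; omega
      rw [this, Set.image_empty, Submodule.span_empty, hC0]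
    | succ i ih =>
      intro hin
      by_cases hs : sel (i + 1)
      · have hC := (hsel (i + 1) (by omega) hin hs).2
        simp only [Nat.add_sub_cancel] at hC
        have hset : {j : ℕ | 1 ≤ j ∧ j ≤ i + 1 ∧ sel j}
            = insert (i + 1) {j : ℕ | 1 ≤ j ∧ j ≤ i ∧ sel j} := by
          ext j
          simp only [Set.mem_setOf_eq, Set.mem_insert_iff]
          constructor
          · rintro ⟨h1, h2, h3⟩
            rcases Nat.lt_or_ge j (i + 1) with h | h
            · exact Or.inr ⟨h1, by omega, h3⟩
            · exact Or.inl (by omega)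
          · rintro (rfl | ⟨h1, h2, h3⟩)
            · exact ⟨by omega, le_refl _, hs⟩
            · exact ⟨h1, by omega, h3⟩
        rw [hset, Set.image_insert_eq, Submodule.span_insert, hC, ih (by omega)]
      · rcases hstep (i + 1) (by omega) hin with ⟨hs', _⟩ | ⟨_, _, hC⟩
        · exact absurd hs' hs
        simp only [Nat.add_sub_cancel] at hC
        have hset : {j : ℕ | 1 ≤ j ∧ j ≤ i + 1 ∧ sel j} = {j : ℕ | 1 ≤ j ∧ j ≤ i ∧ sel j} := by
          ext j
          simp only [Set.mem_setOf_eq]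
          constructor
          · rintro ⟨h1, h2, h3⟩
            refine ⟨h1, ?_, h3⟩
            by_contra hgt
            have hji : j = i + 1 := by omega
            exact hs (hji ▸ h3)
          · rintro ⟨h1, h2, h3⟩; exact ⟨h1, by omega, h3⟩
        rw [hC, hset, ih (by omega)]
  -- assemble the basis
  intro i hi
  set S := {j : ℕ // 1 ≤ j ∧ j ≤ i ∧ sel j}
  set v : S → (Fin n → R) := fun j => a (j : ℕ) with hv
  have hli : LinearIndependent R v := by
    refine li_aux v (fun j => (j : ℕ)) (fun j => C ((j : ℕ) - 1)) ?_ ?_ ?_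
    · intro j j' h; exact Subtype.ext h
    · intro j j' hlt
      have hlt' : (j' : ℕ) < (j : ℕ) := hlt
      have hj' := j'.2
      have hj := j.2
      exact hmono (j' : ℕ) ((j : ℕ) - 1) (by omega) (by omega)
        (hmemC (j' : ℕ) hj'.1 (by omega) hj'.2.2)
    · intro j r hr
      have hj := j.2
      exact hkey (j : ℕ) hj.1 (by omega) hj.2.2 r hr
  have hrange : Set.range v = a '' {j : ℕ | 1 ≤ j ∧ j ≤ i ∧ sel j} :=
    (Set.image_eq_range a {j : ℕ | 1 ≤ j ∧ j ≤ i ∧ sel j}).symm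
  have heq : Submodule.span R (Set.range v) = C i := by
    rw [hrange, ← hspanC i hi]
  refine ⟨(Module.Basis.span hli).map (LinearEquiv.ofEq _ _ heq), fun j => ?_⟩
  simp only [Module.Basis.map_apply, LinearEquiv.coe_ofEq_apply, Module.Basis.span_apply, hv]
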